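/- Let q, x be complex numbers with |q| < 1 and |x| ≤ 1. For nonnegative integers n, m, let B₂(n,m) be the number of multisets of odd positive integers in which every value has multiplicity at most 3, with exactly m elements counted with multiplicity and total sum n. Then Σ_{m,n ≥ 0} B₂(n,m) x^m q^n = (−xq;q²)_∞ (−x²q²;q⁴)_∞, where the double series converges absolutely. -/

import Mathlib

/-- The infinite q-Pochhammer symbol `(a; q)_∞ = ∏_{k=0}^{∞} (1 - a q^k)`. -/
noncomputable def qPochInf (a q : ℂ) : ℂ :=
  ∏' k : ℕ, (1 - a * q ^ k)

/-- `B₂(n,m)`: number of multisets of odd positive integers in which every value has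
multiplicity at most 3, with `m` elements counted with multiplicity and total sum `n`. -/
noncomputable def B2count (n m : ℕ) : ℕ :=
  Set.ncard {M : Multiset ℕ | (∀ p ∈ M, Odd p ∧ 0 < p) ∧ (∀ p, M.count p ≤ 3) ∧
    Multiset.card M = m ∧ M.sum = n}

open Finset Filter

namespace B2G

noncomputable local instance : DecidablePred (fun h : ℕ →₀ ℕ => ∀ k, h k ≤ 3) :=
  fun _ => Classical.dec _

/-- finite identity: sum over bounded finsupps of products equals product of finite sums -/
lemma key_finite {R : Type*} [CommSemiring R] (f : ℕ → R) (s : Finset ℕ) :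
    ∑ h ∈ s.finsupp (fun _ => Finset.range 4), (h.prod fun k e => f k ^ e)
      = ∏ k ∈ s, ∑ e ∈ Finset.range 4, f k ^ e := by
  classical
  rw [Finset.finsupp, Finset.sum_map, Finset.prod_sum]
  simp only [Function.Embedding.coeFn_mk]
  refine Finset.sum_congr (by congr!) fun p hp => ?_
  have hsub : (Finsupp.indicator s p).support ⊆ s :=
    Finset.coe_subset.mp (Finsupp.support_indicator_subset s p)
  rw [Finsupp.prod_of_support_subset _ hsub (fun k e => f k ^ e) (fun i _ => pow_zero _),
    ← Finset.prod_attach s (fun i => f i ^ (Finsupp.indicator s p) i)]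
  exact Finset.prod_congr rfl fun i _ => by rw [Finsupp.indicator_of_mem i.2]

lemma mem_Eset {s : Finset ℕ} {h : ℕ →₀ ℕ} :
    h ∈ s.finsupp (fun _ => Finset.range 4) ↔ h.support ⊆ s ∧ ∀ k, h k ≤ 3 := by
  rw [Finset.mem_finsupp_iff]
  constructor
  · rintro ⟨hs, hv⟩
    refine ⟨hs, fun k => ?_⟩
    by_cases hk : k ∈ s
    · have := Finset.mem_range.mp (hv k hk); omega
    · have : h k = 0 := Finsupp.notMem_support_iff.mp fun hm => hk (hs hm)
      omega
  · rintro ⟨hs, hv⟩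
    exact ⟨hs, fun k _ => Finset.mem_range.mpr (by have := hv k; omega)⟩

lemma sum_toMultiset (g : ℕ →₀ ℕ) : (Finsupp.toMultiset g).sum = g.sum fun a n => n * a := by
  induction g using Finsupp.induction with
  | zero => simp
  | single_add a n f han hn ih =>
      rw [Finsupp.toMultiset_add, Multiset.sum_add, ih, Finsupp.toMultiset_single,
        Finsupp.sum_add_index' (fun a => by simp) (fun a b c => by ring),
        Finsupp.sum_single_index (by simp)]
      simp [Multiset.nsmul_singleton, Multiset.sum_replicate, mul_comm]


section Main

variable (q x : ℂ)

/-- `y k = x * q ^ (2k+1)` -/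
noncomputable def y (k : ℕ) : ℂ := x * q ^ (2 * k + 1)

/-- weight of a finsupp -/
noncomputable def W (h : ℕ →₀ ℕ) : ℂ := h.prod fun k e => y q x k ^ e

/-- the factor `(1 + y k)(1 + y k ^ 2)` -/
noncomputable def A (k : ℕ) : ℂ := (1 + y q x k) * (1 + (y q x k) ^ 2)

variable {q x}

lemma A_eq (k : ℕ) : A q x k = ∑ e ∈ Finset.range 4, y q x k ^ e := by
  simp only [A, Finset.sum_range_succ, Finset.sum_range_zero]
  ring

lemma W_eq (h : ℕ →₀ ℕ) :
    W q x h = x ^ (h.sum fun _ e => e) * q ^ (h.sum fun k e => e * (2 * k + 1)) := by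
  rw [W, Finsupp.prod, Finsupp.sum, Finsupp.sum, ← Finset.prod_pow_eq_pow_sum,
    ← Finset.prod_pow_eq_pow_sum, ← Finset.prod_mul_distrib]
  refine Finset.prod_congr rfl fun k _ => ?_
  rw [y, mul_pow, ← pow_mul, mul_comm (2 * k + 1)]

lemma norm_W (h : ℕ →₀ ℕ) : ‖W q x h‖ = h.prod fun k e => ‖y q x k‖ ^ e := by
  rw [W, Finsupp.prod, Finsupp.prod, norm_prod]
  exact Finset.prod_congr rfl fun k _ => norm_pow _ _

variable (hq : ‖q‖ < 1) (hx : ‖x‖ ≤ 1)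
include hq hx

lemma norm_y_le (k : ℕ) : ‖y q x k‖ ≤ ‖q‖ ^ (2 * k + 1) := by
  rw [y, norm_mul, norm_pow]
  exact mul_le_of_le_one_left (by positivity) hx

omit hx in
include hq in
lemma summable_r : Summable fun k : ℕ => ‖q‖ ^ (2 * k + 1) := by
  have h2 : ‖q‖ ^ 2 < 1 := pow_lt_one₀ (norm_nonneg q) hq two_ne_zero
  have := (summable_geometric_of_lt_one (by positivity) h2).mul_right ‖q‖
  refine this.congr fun k => ?_
  rw [← pow_mul, ← pow_succ]

lemma norm_y_lt_one (k : ℕ) : ‖y q x k‖ < 1 :=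
  lt_of_le_of_lt (norm_y_le hq hx k) (pow_lt_one₀ (norm_nonneg q) hq (by omega))

lemma bound (s : Finset ℕ) :
    ∑ h ∈ s.finsupp (fun _ => Finset.range 4), ‖W q x h‖
      ≤ Real.exp (3 * ∑' k : ℕ, ‖q‖ ^ (2 * k + 1)) := by
  have h1 : ∑ h ∈ s.finsupp (fun _ => Finset.range 4), ‖W q x h‖
      = ∏ k ∈ s, ∑ e ∈ Finset.range 4, ‖y q x k‖ ^ e := by
    simp_rw [norm_W]; exact key_finite _ s
  rw [h1]
  have h2 : ∀ k ∈ s, ∑ e ∈ Finset.range 4, ‖y q x k‖ ^ e ≤ Real.exp (3 * ‖q‖ ^ (2 * k + 1)) := by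
    intro k _
    have ht0 : (0:ℝ) ≤ ‖y q x k‖ := norm_nonneg _
    have ht1 : ‖y q x k‖ ≤ 1 := (norm_y_lt_one hq hx k).le
    have htr : ‖y q x k‖ ≤ ‖q‖ ^ (2 * k + 1) := norm_y_le hq hx k
    have hle : ∑ e ∈ Finset.range 4, ‖y q x k‖ ^ e ≤ 1 + 3 * ‖q‖ ^ (2 * k + 1) := by
      simp only [Finset.sum_range_succ, Finset.sum_range_zero]
      nlinarith [mul_nonneg ht0 (sub_nonneg.mpr ht1),
        mul_nonneg (mul_nonneg ht0 ht0) (sub_nonneg.mpr ht1)]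
    refine hle.trans ?_
    have := Real.add_one_le_exp (3 * ‖q‖ ^ (2 * k + 1))
    linarith
  calc ∏ k ∈ s, ∑ e ∈ Finset.range 4, ‖y q x k‖ ^ e
      ≤ ∏ k ∈ s, Real.exp (3 * ‖q‖ ^ (2 * k + 1)) := by
        refine Finset.prod_le_prod (fun k _ => ?_) h2
        exact Finset.sum_nonneg fun e _ => by positivity
    _ = Real.exp (∑ k ∈ s, 3 * ‖q‖ ^ (2 * k + 1)) := (Real.exp_sum s _).symm
    _ ≤ Real.exp (3 * ∑' k : ℕ, ‖q‖ ^ (2 * k + 1)) := by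
        rw [Real.exp_le_exp, ← Finset.mul_sum]
        refine mul_le_mul_of_nonneg_left ?_ (by norm_num)
        exact (summable_r hq).sum_le_tsum s (fun i _ => by positivity)

/-- the subtype of finsupps with all values at most 3 -/
abbrev Dt : Type := {h : ℕ →₀ ℕ // ∀ k, h k ≤ 3}

lemma summable_D : Summable (fun h : Dt => W q x h.1) := by
  apply Summable.of_norm
  refine summable_of_sum_le (c := Real.exp (3 * ∑' k : ℕ, ‖q‖ ^ (2 * k + 1)))
    (fun h => norm_nonneg _) fun u => ?_
  classical
  set s : Finset ℕ := u.sup (fun h => h.1.support) with hs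
  have hsub : (u.map ⟨Subtype.val, Subtype.val_injective⟩ : Finset (ℕ →₀ ℕ))
      ⊆ s.finsupp (fun _ => Finset.range 4) := by
    intro h hh
    rw [Finset.mem_map] at hh
    obtain ⟨c, hc, rfl⟩ := hh
    exact mem_Eset.mpr ⟨Finset.le_sup (f := fun h : Dt => h.1.support) hc, c.2⟩
  calc ∑ h ∈ u, ‖W q x h.1‖
      = ∑ h ∈ u.map ⟨Subtype.val, Subtype.val_injective⟩, ‖W q x h‖ := by
        rw [Finset.sum_map]; rfl
    _ ≤ ∑ h ∈ s.finsupp (fun _ => Finset.range 4), ‖W q x h‖ :=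
        Finset.sum_le_sum_of_subset_of_nonneg hsub (fun _ _ _ => norm_nonneg _)
    _ ≤ _ := bound hq hx s

lemma sum_EsetD (s : Finset ℕ) :
    ∑ h ∈ (s.finsupp (fun _ => Finset.range 4)).subtype (fun h => ∀ k, h k ≤ 3),
      W q x h.1 = ∏ k ∈ s, A q x k := by
  rw [Finset.sum_subtype_of_mem (fun h => W q x h) (fun h hh => (mem_Eset.mp hh).2)]
  simp_rw [A_eq]
  exact key_finite _ s

lemma hasProd_A : HasProd (A q x) (∑' h : Dt, W q x h.1) := by
  have hs := summable_D hq hx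
  have hmono : Monotone (fun s : Finset ℕ =>
      (s.finsupp (fun _ => Finset.range 4)).subtype (fun h => ∀ k, h k ≤ 3)) := by
    intro s s' hss h hh
    rw [Finset.mem_subtype] at hh ⊢
    obtain ⟨h1, h2⟩ := mem_Eset.mp hh
    exact mem_Eset.mpr ⟨h1.trans hss, h2⟩
  have hexh : ∀ h : Dt, ∃ s : Finset ℕ,
      h ∈ (s.finsupp (fun _ => Finset.range 4)).subtype (fun g : ℕ →₀ ℕ => ∀ k, g k ≤ 3) := by
    intro h
    exact ⟨h.1.support, Finset.mem_subtype.mpr (mem_Eset.mpr ⟨le_refl _, h.2⟩)⟩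
  have h1 := tendsto_atTop_finset_of_monotone hmono hexh
  have h2 := hs.hasSum.comp h1
  refine Filter.Tendsto.congr (fun s => ?_) h2
  exact sum_EsetD hq hx s

omit hq hx in
lemma one_add_ne_zero {z : ℂ} (h : ‖z‖ < 1) : 1 + z ≠ 0 := by
  intro h0
  have : z = -1 := by linear_combination h0
  rw [this] at h
  simp at h

lemma summable_log {z : ℕ → ℂ} (hz : ∀ k, ‖z k‖ ≤ ‖q‖ ^ (2 * k + 1)) :
    Summable fun k => Complex.log (1 + z k) := by
  have hr := (summable_r hq).tendsto_atTop_zero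
  have hev : ∀ᶠ k in atTop, ‖Complex.log (1 + z k)‖ ≤ (3/2) * ‖q‖ ^ (2 * k + 1) := by
    filter_upwards [hr.eventually_lt_const (by norm_num : (0:ℝ) < 1/2)] with k hk
    have hzk : ‖z k‖ ≤ 1/2 := (hz k).trans hk.le
    calc ‖Complex.log (1 + z k)‖ ≤ (3/2) * ‖z k‖ :=
          Complex.norm_log_one_add_half_le_self hzk
      _ ≤ (3/2) * ‖q‖ ^ (2 * k + 1) := by
          have := hz k; nlinarith
  refine Summable.of_norm_bounded_eventually ((summable_r hq).mul_left (3/2)) ?_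
  rwa [Nat.cofinite_eq_atTop]

lemma mult_one : Multipliable fun k => 1 + y q x k := by
  refine Complex.multipliable_of_summable_log ?_
  exact summable_log hq hx (norm_y_le hq hx)

lemma mult_two : Multipliable fun k => 1 + (y q x k) ^ 2 := by
  have hn : ∀ k, ‖(y q x k) ^ 2‖ ≤ ‖q‖ ^ (2 * k + 1) := by
    intro k
    rw [norm_pow]
    calc ‖y q x k‖ ^ 2 ≤ ‖y q x k‖ := by
          have h0 := norm_nonneg (y q x k)
          have h1 := (norm_y_lt_one hq hx k).le
          nlinarith
      _ ≤ _ := norm_y_le hq hx k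
  refine Complex.multipliable_of_summable_log ?_
  exact summable_log hq hx hn

lemma rhs_eq : qPochInf (-(x * q)) (q ^ 2) * qPochInf (-(x ^ 2 * q ^ 2)) (q ^ 4)
    = ∏' k, A q x k := by
  have e1 : qPochInf (-(x * q)) (q ^ 2) = ∏' k, (1 + y q x k) := by
    refine tprod_congr fun k => ?_
    have h1 : ((q:ℂ) ^ 2) ^ k = q ^ (2 * k) := (pow_mul q 2 k).symm
    have h2 : (q:ℂ) ^ (2 * k + 1) = q ^ (2 * k) * q := pow_succ q (2 * k)
    rw [y, h1, h2]
    ring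
  have e2 : qPochInf (-(x ^ 2 * q ^ 2)) (q ^ 4) = ∏' k, (1 + (y q x k) ^ 2) := by
    refine tprod_congr fun k => ?_
    have h1 : ((q:ℂ) ^ 4) ^ k = q ^ (4 * k) := (pow_mul q 4 k).symm
    have h2 : ((q:ℂ) ^ (2 * k + 1)) ^ 2 = q ^ (4 * k + 2) := by
      rw [← pow_mul]; congr 1; ring
    have h3 : (q:ℂ) ^ (4 * k + 2) = q ^ (4 * k) * q ^ 2 := pow_add q (4 * k) 2
    rw [y, mul_pow, h1, h2, h3]
    ring
  rw [e1, e2, ← (mult_one hq hx).tprod_mul (mult_two hq hx)]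
  rfl

end Main

/-! ### Multiset correspondence -/

/-- the embedding `k ↦ 2k+1` -/
def oddEmb : ℕ ↪ ℕ := ⟨fun k => 2 * k + 1, fun a b h => by simp only at h; omega⟩

/-- the subtype of multisets of odd positive integers with multiplicities at most 3 -/
abbrev Tt : Type :=
  {M : Multiset ℕ // (∀ p ∈ M, Odd p ∧ 0 < p) ∧ (∀ p, M.count p ≤ 3)}

/-- the multiset associated to a finsupp of multiplicities -/
noncomputable def Ψ (h : ℕ →₀ ℕ) : Multiset ℕ := Finsupp.toMultiset (Finsupp.embDomain oddEmb h)

lemma odd_exists {p : ℕ} (h1 : Odd p) : ∃ k, p = 2 * k + 1 := by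
  obtain ⟨m, hm⟩ := h1
  exact ⟨m, by omega⟩

lemma count_Ψ (h : ℕ →₀ ℕ) (k : ℕ) : (Ψ h).count (2 * k + 1) = h k := by
  rw [Ψ, Finsupp.count_toMultiset]
  exact Finsupp.embDomain_apply_self oddEmb h k

lemma count_Ψ_of_not (h : ℕ →₀ ℕ) {p : ℕ} (hp : ¬ Odd p) : (Ψ h).count p = 0 := by
  rw [Ψ, Finsupp.count_toMultiset]
  refine Finsupp.embDomain_notin_range _ _ _ fun hmem => ?_
  obtain ⟨k, hk⟩ := hmem
  exact hp ⟨k, by rw [← hk]; rfl⟩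

lemma mem_Ψ (h : ℕ →₀ ℕ) {p : ℕ} (hp : p ∈ Ψ h) : Odd p ∧ 0 < p := by
  by_cases ho : Odd p
  · refine ⟨ho, ?_⟩
    rcases Nat.eq_zero_or_pos p with h0 | h0
    · rw [h0] at ho; simp [Nat.odd_iff] at ho
    · exact h0
  · exact absurd (count_Ψ_of_not h ho) (by simpa [Multiset.count_eq_zero] using hp)

lemma card_Ψ (h : ℕ →₀ ℕ) : Multiset.card (Ψ h) = h.sum fun _ e => e := by
  rw [Ψ, Finsupp.card_toMultiset, Finsupp.sum_embDomain]
  rfl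

lemma sum_Ψ (h : ℕ →₀ ℕ) : (Ψ h).sum = h.sum fun k e => e * (2 * k + 1) := by
  rw [Ψ, sum_toMultiset, Finsupp.sum_embDomain]
  rfl

lemma injOn_odd (M : Multiset ℕ) :
    Set.InjOn (fun k => 2 * k + 1) ((fun k => 2 * k + 1) ⁻¹' ↑M.toFinsupp.support) :=
  fun a _ b _ h => by simp only at h; omega

/-- The equivalence between bounded finsupps and multisets of odd positive integers
with multiplicities at most `3`. -/
noncomputable def EDT : Dt ≃ Tt where
  toFun h := ⟨Ψ h.1, fun p hp => mem_Ψ h.1 hp, fun p => by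
    by_cases ho : Odd p
    · obtain ⟨k, rfl⟩ := odd_exists ho
      rw [count_Ψ]; exact h.2 k
    · rw [count_Ψ_of_not h.1 ho]; omega⟩
  invFun M := ⟨Finsupp.comapDomain (fun k => 2 * k + 1) M.1.toFinsupp (injOn_odd M.1),
    fun k => by
      rw [Finsupp.comapDomain_apply, Multiset.toFinsupp_apply]
      exact M.2.2 (2 * k + 1)⟩
  left_inv h := by
    apply Subtype.ext
    ext k
    rw [Finsupp.comapDomain_apply, Multiset.toFinsupp_apply]
    exact count_Ψ h.1 k
  right_inv M := by
    apply Subtype.ext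
    ext p
    by_cases ho : Odd p
    · obtain ⟨k, rfl⟩ := odd_exists ho
      rw [count_Ψ, Finsupp.comapDomain_apply, Multiset.toFinsupp_apply]
    · rw [count_Ψ_of_not _ ho, eq_comm, Multiset.count_eq_zero]
      exact fun hmem => ho (M.2.1 p hmem).1

lemma finite_B2set (m n : ℕ) :
    {M : Multiset ℕ | (∀ p ∈ M, Odd p ∧ 0 < p) ∧ (∀ p, M.count p ≤ 3) ∧
      Multiset.card M = m ∧ M.sum = n}.Finite := by
  classical
  have hbig : {M : Multiset ℕ | M ≤ 3 • (Finset.range (n+1)).val}.Finite :=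
    Set.Finite.ofFinset ((3 • (Finset.range (n+1)).val).powerset.toFinset)
      (by simp [Multiset.mem_powerset])
  refine hbig.subset ?_
  rintro M ⟨h1, h2, h3, h4⟩
  simp only [Set.mem_setOf_eq]
  rw [Multiset.le_iff_count]
  intro p
  by_cases hp : p ∈ M
  · have hple : p ≤ n := h4 ▸ Multiset.single_le_sum (fun z _ => Nat.zero_le z) p hp
    rw [Multiset.count_nsmul]
    have hcnt : (Finset.range (n+1)).val.count p = 1 := by
      rw [Multiset.count_eq_one_of_mem (Finset.range (n+1)).nodup]
      simpa using by omega
    rw [hcnt]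
    have := h2 p
    omega
  · simp [Multiset.count_eq_zero_of_notMem hp]

/-- the statistics map: number of parts and sum -/
def phi (M : Tt) : ℕ × ℕ := (Multiset.card M.1, M.1.sum)

/-- fibers of `phi` are the sets counted by `B2count` -/
def fibEquiv (p : ℕ × ℕ) : {M : Tt // phi M = p} ≃
    {M : Multiset ℕ | (∀ r ∈ M, Odd r ∧ 0 < r) ∧ (∀ r, M.count r ≤ 3) ∧
      Multiset.card M = p.1 ∧ M.sum = p.2} where
  toFun c := ⟨c.1.1, ⟨c.1.2.1, c.1.2.2,
    congrArg Prod.fst c.2, congrArg Prod.snd c.2⟩⟩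
  invFun M := ⟨⟨M.1, M.2.1, M.2.2.1⟩, Prod.ext M.2.2.2.1 M.2.2.2.2⟩
  left_inv c := rfl
  right_inv M := rfl

lemma card_fiber (p : ℕ × ℕ) : Nat.card {M : Tt // phi M = p} = B2count p.2 p.1 := by
  rw [Nat.card_congr (fibEquiv p), B2count, ← Nat.card_coe_set_eq]

lemma hasSum_fiber (q x : ℂ) (p : ℕ × ℕ) :
    HasSum (fun c : {M : Tt // phi M = p} => x ^ (Multiset.card c.1.1) * q ^ (c.1.1.sum))
      ((B2count p.2 p.1 : ℂ) * x ^ p.1 * q ^ p.2) := by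
  have hfin : Finite {M : Tt // phi M = p} := by
    have := (finite_B2set p.1 p.2).to_subtype
    exact Finite.of_equiv _ (fibEquiv p).symm
  haveI := Fintype.ofFinite {M : Tt // phi M = p}
  have h := hasSum_fintype (fun c : {M : Tt // phi M = p} =>
    x ^ (Multiset.card c.1.1) * q ^ (c.1.1.sum))
  have heq : ∑ c : {M : Tt // phi M = p}, x ^ (Multiset.card c.1.1) * q ^ (c.1.1.sum)
      = (B2count p.2 p.1 : ℂ) * x ^ p.1 * q ^ p.2 := by
    have hconst : ∀ c : {M : Tt // phi M = p},
        x ^ (Multiset.card c.1.1) * q ^ (c.1.1.sum) = x ^ p.1 * q ^ p.2 := by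
      rintro ⟨M, hM⟩
      rw [show Multiset.card M.1 = p.1 from congrArg Prod.fst hM,
        show M.1.sum = p.2 from congrArg Prod.snd hM]
    rw [Finset.sum_congr rfl (fun c _ => hconst c), Finset.sum_const, Finset.card_univ,
      ← Nat.card_eq_fintype_card, card_fiber, nsmul_eq_mul, mul_assoc]
  rwa [heq] at h

theorem main (q x : ℂ) (hq : ‖q‖ < 1) (hx : ‖x‖ ≤ 1) :
    HasSum (fun p : ℕ × ℕ => (B2count p.2 p.1 : ℂ) * x ^ p.1 * q ^ p.2)
      (qPochInf (-(x * q)) (q ^ 2) * qPochInf (-(x ^ 2 * q ^ 2)) (q ^ 4)) := by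
  have hD : HasSum (fun h : Dt => W q x h.1) (∑' h : Dt, W q x h.1) :=
    (summable_D hq hx).hasSum
  have hT : HasSum (fun M : Tt => x ^ (Multiset.card M.1) * q ^ (M.1.sum))
      (∑' h : Dt, W q x h.1) := by
    rw [← Equiv.hasSum_iff EDT]
    refine hD.congr_fun fun h => ?_
    show x ^ (Multiset.card (Ψ h.1)) * q ^ ((Ψ h.1).sum) = W q x h.1
    rw [card_Ψ, sum_Ψ, W_eq]
  have hsig : HasSum (fun c : (Σ p : ℕ × ℕ, {M : Tt // phi M = p}) =>
      x ^ (Multiset.card c.2.1.1) * q ^ (c.2.1.1.sum)) (∑' h : Dt, W q x h.1) := by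
    rw [← (Equiv.sigmaFiberEquiv phi).hasSum_iff] at hT
    exact hT
  have hfinal : HasSum (fun p : ℕ × ℕ => (B2count p.2 p.1 : ℂ) * x ^ p.1 * q ^ p.2)
      (∑' h : Dt, W q x h.1) :=
    HasSum.sigma hsig (fun p => hasSum_fiber q x p)
  have hprod := hasProd_A hq hx
  rwa [rhs_eq hq hx, hprod.tprod_eq]

end B2G

/-- The generating function for `B₂`:
`Σ_{m,n≥0} B₂(n,m) x^m q^n = (−xq;q²)_∞ (−x²q²;q⁴)_∞`. -/
theorem B2_genfun (q x : ℂ) (hq : ‖q‖ < 1) (hx : ‖x‖ ≤ 1) :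
    Summable (fun p : ℕ × ℕ => (B2count p.2 p.1 : ℂ) * x ^ p.1 * q ^ p.2) ∧
    ∑' p : ℕ × ℕ, (B2count p.2 p.1 : ℂ) * x ^ p.1 * q ^ p.2 =
      qPochInf (-(x * q)) (q ^ 2) * qPochInf (-(x ^ 2 * q ^ 2)) (q ^ 4) := by
  have h := B2G.main q x hq hx
  exact ⟨h.summable, h.tsum_eq⟩
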